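/- For every k ≥ 2, n ≥ 1, and every function f : ({0,1}^n)^k → {0,1}, the deterministic k-party NOF communication complexity of the (k−1)-fold direct sum of f satisfies D^NOF(f^{k−1}) ≤ n + k − 1. -/

import Mathlib

/-!  Deterministic `k`-party Number-On-the-Forehead (NOF) blackboard protocols.
Inputs come from a type `X`; party `P_i` sees every input except its own, which is
modelled by giving each party the "erased" input vector `NOFview i x` (its own
coordinate replaced by `none`).  At each step the speaker (determined by the
transcript written so far on the shared board) writes one bit, depending on the
transcript and on the inputs it sees.  After `P.T` steps every party must be able
to determine the required output from the transcript and the inputs it sees. -/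
structure NOFProtocol (k : ℕ) (X O : Type) where
  /-- number of bits written on the board (the cost of the protocol) -/
  T : ℕ
  /-- who speaks next, as a function of the transcript -/
  speaker : List Bool → Fin k
  /-- the bit written by the speaker: a function of the transcript and of the
  inputs the speaker sees -/
  nextBit : List Bool → (Fin k → Option X) → Bool
  /-- how party `i` determines the output from the final transcript and the
  inputs it sees -/
  out : Fin k → List Bool → (Fin k → Option X) → O

/-- What party `i` sees in the NOF model: every input except its own. -/
def NOFview {k : ℕ} {X : Type} (i : Fin k) (x : Fin k → X) : Fin k → Option X :=
  fun j => if j = i then none else some (x j)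

/-- The transcript on the board after `t` steps. -/
def NOFrun {k : ℕ} {X O : Type} (P : NOFProtocol k X O) (x : Fin k → X) : ℕ → List Bool
  | 0 => []
  | t + 1 => NOFrun P x t ++ [P.nextBit (NOFrun P x t) (NOFview (P.speaker (NOFrun P x t)) x)]

/-- `P` computes `F` if, on every input, every party determines `F x` from the
final transcript and the inputs it sees. -/
def NOFComputes {k : ℕ} {X O : Type} (P : NOFProtocol k X O) (F : (Fin k → X) → O) : Prop :=
  ∀ x i, P.out i (NOFrun P x P.T) (NOFview i x) = F x

/-- Deterministic NOF communication complexity: the least cost of a protocol computing `F`. -/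
noncomputable def DNOF (k : ℕ) (X O : Type) (F : (Fin k → X) → O) : ℕ :=
  sInf {c | ∃ P : NOFProtocol k X O, P.T = c ∧ NOFComputes P F}

/-- The `ℓ`-fold direct sum `f^ℓ`: party `j` holds the `ℓ` inputs `x j 0, …, x j (ℓ-1)`
on its forehead, and all `ℓ` values `f` on the respective instances must be computed. -/
def directSum {k n : ℕ} (ℓ : ℕ) (f : (Fin k → (Fin n → Bool)) → Bool) :
    (Fin k → (Fin ℓ → Fin n → Bool)) → (Fin ℓ → Bool) :=
  fun x u => f fun j => x j u

def bzz : Bool → ZMod 2 := fun c => if c then 1 else 0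

lemma bzz_decide (a : ZMod 2) : bzz (decide (a = 1)) = a := by revert a; decide
lemma decide_bzz (c : Bool) : decide (bzz c = 1) = c := by revert c; decide

lemma getD_range_map (g : ℕ → Bool) (t s : ℕ) (h : s < t) :
    ((List.range t).map g).getD s false = g s := by
  rw [List.getD_eq_getElem _ _ (by simpa using h)]
  simp [h]

def dfltX (K n : ℕ) : Fin K → Fin n → Bool := fun _ _ => false

/-- the protocol: the last party broadcasts the `n` XOR bits
`⊕_i x_{i,i}`, then party `m` (for `m = 0, …, K-1`) recovers its instance and
broadcasts `f` on instance `m`. -/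
def myProt (K n : ℕ) (f : (Fin (K + 1) → (Fin n → Bool)) → Bool) :
    NOFProtocol (K + 1) (Fin K → Fin n → Bool) (Fin K → Bool) where
  T := n + K
  speaker L := if L.length < n then Fin.last K
    else ⟨(L.length - n) % (K + 1), Nat.mod_lt _ K.succ_pos⟩
  nextBit L v :=
    if h : L.length < n then
      decide ((∑ i : Fin K, bzz ((v i.castSucc).getD (dfltX K n) i ⟨L.length, h⟩)) = 1)
    else if h2 : L.length - n < K then
      f (fun j => if j = (⟨L.length - n, h2⟩ : Fin K).castSucc then
          (fun s => decide ((bzz (L.getD s false) -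
            ∑ i ∈ Finset.univ.erase (⟨L.length - n, h2⟩ : Fin K),
              bzz ((v i.castSucc).getD (dfltX K n) i s)) = 1))
        else (v j).getD (dfltX K n) ⟨L.length - n, h2⟩)
    else false
  out _ L _ := fun u => L.getD (n + u) false

/-- the intended transcript bits -/
def myBits (K n : ℕ) (f : (Fin (K + 1) → (Fin n → Bool)) → Bool)
    (x : Fin (K + 1) → Fin K → Fin n → Bool) (t : ℕ) : Bool :=
  if h : t < n then decide ((∑ i : Fin K, bzz (x i.castSucc i ⟨t, h⟩)) = 1)
  else if h2 : t - n < K then f (fun j => x j ⟨t - n, h2⟩) else false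

lemma myRun (K n : ℕ) (f : (Fin (K + 1) → (Fin n → Bool)) → Bool)
    (x : Fin (K + 1) → Fin K → Fin n → Bool) :
    ∀ t, t ≤ n + K →
      NOFrun (myProt K n f) x t = (List.range t).map (myBits K n f x) := by
  intro t
  induction t with
  | zero => intro _; simp [NOFrun]
  | succ t ih =>
    intro ht
    have ih' := ih (by omega)
    rw [NOFrun, ih', List.range_succ, List.map_append]
    congr 1
    set L := (List.range t).map (myBits K n f x) with hLdef
    have hL : L.length = t := by simp [hLdef]
    simp only [List.map_cons, List.map_nil]
    congr 1
    by_cases h : t < n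
    · -- XOR broadcasting phase
      have hsp : (myProt K n f).speaker L = Fin.last K := by
        simp [myProt, hL, h]
      rw [hsp]
      show (myProt K n f).nextBit L (NOFview (Fin.last K) x) = myBits K n f x t
      simp only [myProt, hL, h, dif_pos, myBits]
      congr 2
      apply Finset.sum_congr rfl
      intro i _
      have : NOFview (Fin.last K) x i.castSucc = some (x i.castSucc) := by
        simp [NOFview, (Fin.castSucc_lt_last i).ne]
      rw [this, Option.getD_some]
    · -- announcing phase
      have h2 : t - n < K := by omega
      set m : Fin K := ⟨t - n, h2⟩ with hm
      have hsp : (myProt K n f).speaker L = m.castSucc := by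
        simp only [myProt, hL, h, if_false]
        ext
        simp [hm, Nat.mod_eq_of_lt (by omega : t - n < K + 1)]
      rw [hsp]
      show (myProt K n f).nextBit L (NOFview m.castSucc x) = myBits K n f x t
      simp only [myProt, hL, h, dif_neg, not_false_iff, h2, dif_pos, myBits]
      congr 1
      funext j
      by_cases hj : j = m.castSucc
      · rw [if_pos hj, hj]
        funext s
        have hLs : L.getD s false = myBits K n f x s := by
          rw [hLdef]; exact getD_range_map _ _ _ (by omega)
        rw [hLs]
        have hbit : myBits K n f x s =
            decide ((∑ i : Fin K, bzz (x i.castSucc i s)) = 1) := by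
          simp [myBits, s.isLt]
        rw [hbit, bzz_decide]
        have hview : ∀ i : Fin K, i ≠ m →
            (NOFview m.castSucc x i.castSucc).getD (dfltX K n) = x i.castSucc := by
          intro i hi
          have : i.castSucc ≠ m.castSucc := fun hc => hi (Fin.castSucc_injective K hc)
          simp [NOFview, this]
        have hsum : ∑ i ∈ Finset.univ.erase m,
            bzz ((NOFview m.castSucc x i.castSucc).getD (dfltX K n) i s)
            = ∑ i ∈ Finset.univ.erase m, bzz (x i.castSucc i s) := by
          apply Finset.sum_congr rfl
          intro i hi
          rw [hview i (Finset.ne_of_mem_erase hi)]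
        rw [hsum]
        have htot : ∑ i ∈ Finset.univ.erase m, bzz (x i.castSucc i s) + bzz (x m.castSucc m s)
            = ∑ i : Fin K, bzz (x i.castSucc i s) :=
          Finset.sum_erase_add _ _ (Finset.mem_univ m)
        have : (∑ i : Fin K, bzz (x i.castSucc i s)) -
            ∑ i ∈ Finset.univ.erase m, bzz (x i.castSucc i s) = bzz (x m.castSucc m s) := by
          rw [← htot]; ring
        rw [this, decide_bzz]
      · rw [if_neg hj]
        have : NOFview m.castSucc x j = some (x j) := by simp [NOFview, hj]
        rw [this, Option.getD_some]

lemma myComputes (K n : ℕ) (f : (Fin (K + 1) → (Fin n → Bool)) → Bool) :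
    NOFComputes (myProt K n f) (directSum K f) := by
  intro x i
  have hT : (myProt K n f).T = n + K := rfl
  rw [hT, myRun K n f x (n + K) le_rfl]
  funext u
  show ((List.range (n + K)).map (myBits K n f x)).getD (n + u) false = directSum K f x u
  rw [getD_range_map _ _ _ (by omega)]
  have h1 : ¬ (n + (u : ℕ) < n) := by omega
  simp [myBits, h1, directSum, u.isLt]

/-- For every `k ≥ 2`, `n ≥ 1` and every `f : ({0,1}^n)^k → {0,1}`,
the deterministic `k`-party NOF communication complexity of the `(k-1)`-fold direct
sum of `f` satisfies `D^NOF(f^{k-1}) ≤ n + k - 1`. -/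
theorem dnof_directSum_le_of_km1 (k n : ℕ) (hk : 2 ≤ k) (hn : 1 ≤ n)
    (f : (Fin k → (Fin n → Bool)) → Bool) :
    DNOF k (Fin (k - 1) → Fin n → Bool) (Fin (k - 1) → Bool) (directSum (k - 1) f) ≤
      n + k - 1 := by
  obtain ⟨K, rfl⟩ : ∃ K, k = K + 1 := ⟨k - 1, by omega⟩
  exact Nat.sInf_le ⟨myProt K n f, rfl, myComputes K n f⟩
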